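/- Let n be a natural number and let G be a pure subgroup of ℤ^n. Then G, viewed as a set of n-tuples of integers, is definable without parameters by a first-order formula (indeed a quantifier-free one) in the first-order language whose only symbols are a constant symbol 0 and a binary function symbol +, interpreted in the standard way on ℤ. In particular, every pure subgroup of ℤ^n is definable in Presburger arithmetic. -/

import Mathlib

open FirstOrder

/-- The first-order language whose only symbols are a constant symbol `0` and a
binary function symbol `+`. -/
def addLanguage : Language where
  Functions := fun n =>
    match n with
    | 0 => Unit
    | 2 => Unit
    | _ => Empty
  Relations := fun _ => Empty

/-- The standard interpretation of the language `{0, +}` on `ℤ`. -/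
instance addLanguage.intStructure : addLanguage.Structure ℤ where
  funMap {n} f x :=
    match n, f, x with
    | 0, _, _ => 0
    | 2, _, x => x 0 + x 1
  RelMap {n} r _ := Empty.elim r

open FirstOrder.Language

namespace PureAux

def zeroT {α : Type*} : addLanguage.Term α := Term.func (l := 0) Unit.unit ![]

def addT {α : Type*} (t u : addLanguage.Term α) : addLanguage.Term α :=
  Term.func (l := 2) Unit.unit ![t, u]

lemma realize_zeroT {α : Type*} (v : α → ℤ) : (zeroT (α := α)).realize v = 0 := rfl

lemma realize_addT {α : Type*} (v : α → ℤ) (t u : addLanguage.Term α) :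
    (addT t u).realize v = t.realize v + u.realize v := rfl

/-- `c` copies of `t` added together. -/
def nsmulT {α : Type*} : ℕ → addLanguage.Term α → addLanguage.Term α
  | 0, _ => zeroT
  | (k + 1), t => addT t (nsmulT k t)

lemma realize_nsmulT {α : Type*} (v : α → ℤ) (k : ℕ) (t : addLanguage.Term α) :
    (nsmulT k t).realize v = (k : ℤ) * t.realize v := by
  induction k with
  | zero => simp [nsmulT, realize_zeroT]
  | succ k ih =>
    rw [nsmulT, realize_addT, ih]
    push_cast
    ring

/-- The term `∑ j ∈ l, c j * (var j)`. -/
def sumT {α : Type*} (c : α → ℕ) : List α → addLanguage.Term α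
  | [] => zeroT
  | j :: l => addT (nsmulT (c j) (Term.var j)) (sumT c l)

lemma realize_sumT {α : Type*} (v : α → ℤ) (c : α → ℕ) (l : List α) :
    (sumT c l).realize v = (l.map fun j => (c j : ℤ) * v j).sum := by
  induction l with
  | nil => simp [sumT, realize_zeroT]
  | cons j l ih =>
    rw [sumT, realize_addT, ih, realize_nsmulT]
    simp [Term.realize]

/-- A quantifier-free formula expressing `∑ j, a j * x j = 0` for `a : Fin n → ℤ`. -/
def rowF {n : ℕ} (a : Fin n → ℤ) : addLanguage.Formula (Fin n) :=
  Term.equal (sumT (fun j => (a j).toNat) (List.finRange n))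
    (sumT (fun j => (-a j).toNat) (List.finRange n))

lemma rowF_isQF {n : ℕ} (a : Fin n → ℤ) : (rowF a).IsQF :=
  (BoundedFormula.IsAtomic.equal _ _).isQF

lemma realize_rowF {n : ℕ} (a : Fin n → ℤ) (x : Fin n → ℤ) :
    (rowF a).Realize x ↔ ∑ j, a j * x j = 0 := by
  rw [rowF, Formula.realize_equal, realize_sumT, realize_sumT,
    ← Fin.sum_univ_def, ← Fin.sum_univ_def]
  have key : ∀ j, a j * x j = ((a j).toNat : ℤ) * x j - ((-a j).toNat : ℤ) * x j := by
    intro j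
    have : ((a j).toNat : ℤ) - ((-a j).toNat : ℤ) = a j := by omega
    linear_combination x j * this.symm
  rw [Finset.sum_congr rfl fun j _ => key j, Finset.sum_sub_distrib, sub_eq_zero, eq_comm]

end PureAux

namespace PureAux

/-- Conjunction of a list of formulas. -/
def conjF {α : Type*} : List (addLanguage.Formula α) → addLanguage.Formula α
  | [] => ⊤
  | φ :: l => φ ⊓ conjF l

lemma conjF_isQF {α : Type*} (l : List (addLanguage.Formula α))
    (h : ∀ φ ∈ l, φ.IsQF) : (conjF l).IsQF := by
  induction l with
  | nil => exact BoundedFormula.IsQF.top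
  | cons φ l ih =>
    exact (h φ (by simp)).inf (ih fun ψ hψ => h ψ (by simp [hψ]))

lemma mem_toIntSubmodule' {M : Type*} [AddCommGroup M] (G : AddSubgroup M) (x : M) :
    x ∈ AddSubgroup.toIntSubmodule G ↔ x ∈ G := Iff.rfl

lemma realize_conjF {α : Type*} (v : α → ℤ) (l : List (addLanguage.Formula α)) :
    (conjF l).Realize v ↔ ∀ φ ∈ l, φ.Realize v := by
  induction l with
  | nil => simp [conjF]
  | cons φ l ih => simp [conjF, Formula.realize_inf, ih]

end PureAux

open PureAux in
theorem pure_subgroup_definable (n : ℕ) (G : AddSubgroup (Fin n → ℤ))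
    (hpure : ∀ c : ℤ, c ≠ 0 → ∀ x : Fin n → ℤ, c • x ∈ G → x ∈ G) :
    ∃ φ : addLanguage.Formula (Fin n),
      φ.IsQF ∧ ∀ x : Fin n → ℤ, x ∈ G ↔ φ.Realize x := by
  classical
  set S := AddSubgroup.toIntSubmodule G with hS
  haveI : NoZeroSMulDivisors ℤ ((Fin n → ℤ) ⧸ S) := by
    refine ⟨fun {c x} h => ?_⟩
    by_contra hcx
    push_neg at hcx
    obtain ⟨hc, hx⟩ := hcx
    obtain ⟨y, rfl⟩ := Submodule.Quotient.mk_surjective S x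
    rw [← Submodule.Quotient.mk_smul, Submodule.Quotient.mk_eq_zero] at h
    refine hx ?_
    rw [Submodule.Quotient.mk_eq_zero]
    exact hpure c hc y h
  obtain ⟨m, b⟩ := Module.basisOfFiniteTypeTorsionFree' (R := ℤ) (M := (Fin n → ℤ) ⧸ S)
  set q := S.mkQ with hq
  set a : Fin m → Fin n → ℤ := fun i j => b.repr (q (Pi.single j 1)) i with ha
  have hmem : ∀ x : Fin n → ℤ, x ∈ G ↔ ∀ i, ∑ j, a i j * x j = 0 := by
    intro x
    have hxe : x = ∑ j, x j • Pi.single j 1 := by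
      ext k
      simp [Finset.sum_apply, Pi.single_apply]
    have hx : q x = ∑ j, x j • q (Pi.single j 1) := by
      conv_lhs => rw [hxe]
      rw [map_sum]
      exact Finset.sum_congr rfl fun j _ => map_smul q _ _
    have hrepr : ∀ i, b.repr (q x) i = ∑ j, a i j * x j := by
      intro i
      rw [hx, map_sum, Finsupp.finset_sum_apply]
      refine Finset.sum_congr rfl fun j _ => ?_
      rw [map_smul]
      simp [ha, mul_comm]
    constructor
    · intro hxG i
      rw [← hrepr i]
      have : q x = 0 := by
        rw [hq, Submodule.mkQ_apply, Submodule.Quotient.mk_eq_zero]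
        exact hxG
      simp [this]
    · intro h
      have h0 : b.repr (q x) = 0 := Finsupp.ext fun i => by simpa [hrepr i] using h i
      have hq0 : q x = 0 := by rwa [LinearEquiv.map_eq_zero_iff] at h0
      rw [hq, Submodule.mkQ_apply, Submodule.Quotient.mk_eq_zero] at hq0
      exact hq0
  refine ⟨conjF ((List.finRange m).map fun i => rowF (a i)), ?_, ?_⟩
  · refine conjF_isQF _ fun φ hφ => ?_
    simp only [List.mem_map] at hφ
    obtain ⟨i, _, rfl⟩ := hφ
    exact rowF_isQF _
  · intro x
    rw [hmem x, realize_conjF]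
    constructor
    · intro h φ hφ
      simp only [List.mem_map] at hφ
      obtain ⟨i, _, rfl⟩ := hφ
      exact (realize_rowF _ _).mpr (h i)
    · intro h i
      exact (realize_rowF _ _).mp (h _ (List.mem_map_of_mem (List.mem_finRange i)))
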